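/- With F, H, α as above and Ḡ(x) = 1 − F(x) + x^{-α} H(x), if H ∈ RV_θ with 0 ≤ θ < α, then x^α Ḡ(x)/H(x) → α/(α − θ) as x → ∞. -/

import Mathlib

open MeasureTheory Real Filter Set

set_option maxHeartbeats 1000000

lemma auxIntegrableOn_rpow {α : ℝ} (ν : Measure ℝ) [IsFiniteMeasure ν] (hα : 0 < α) (t : ℝ) :
    IntegrableOn (fun y : ℝ => y ^ α) (Ioc 0 t) ν := by
  apply Measure.integrableOn_of_bounded (M := |t| ^ α) (measure_ne_top ν _)
    ((Real.continuous_rpow_const hα.le).measurable.aestronglyMeasurable)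
  filter_upwards [ae_restrict_mem measurableSet_Ioc] with y hy
  rw [Real.norm_of_nonneg (Real.rpow_nonneg hy.1.le _)]
  exact Real.rpow_le_rpow hy.1.le (hy.2.trans (le_abs_self t)) hα.le

lemma auxHdiff {α : ℝ} (ν : Measure ℝ) [IsFiniteMeasure ν] (hα : 0 < α) {a b : ℝ}
    (ha : 0 ≤ a) (hab : a ≤ b) :
    (∫ y in Ioc 0 b, y ^ α ∂ν) - ∫ y in Ioc 0 a, y ^ α ∂ν = ∫ y in Ioc a b, y ^ α ∂ν := by
  have h := setIntegral_union (f := fun y : ℝ => y ^ α) (μ := ν) (Ioc_disjoint_Ioc_of_le le_rfl)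
    measurableSet_Ioc ((auxIntegrableOn_rpow ν hα b).mono_set (Ioc_subset_Ioc_right hab))
    ((auxIntegrableOn_rpow ν hα b).mono_set (Ioc_subset_Ioc_left ha))
  rw [Ioc_union_Ioc_eq_Ioc ha hab] at h
  linarith

lemma auxStepU {α : ℝ} (ν : Measure ℝ) [IsFiniteMeasure ν] (hα : 0 < α) {a b : ℝ}
    (ha : 0 < a) (hab : a ≤ b) :
    a ^ α * (ν (Ioc a b)).toReal ≤ ∫ y in Ioc a b, y ^ α ∂ν := by
  have h1 : ∫ y in Ioc a b, (a:ℝ) ^ α ∂ν ≤ ∫ y in Ioc a b, y ^ α ∂ν := by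
    apply setIntegral_mono_on (integrableOn_const (measure_ne_top ν _))
      ((auxIntegrableOn_rpow ν hα b).mono_set (Ioc_subset_Ioc_left ha.le)) measurableSet_Ioc
    exact fun y hy => Real.rpow_le_rpow ha.le hy.1.le hα.le
  simpa [setIntegral_const, smul_eq_mul, mul_comm, measureReal_def] using h1

lemma auxStepL {α : ℝ} (ν : Measure ℝ) [IsFiniteMeasure ν] (hα : 0 < α) {a b : ℝ}
    (ha : 0 < a) (hab : a ≤ b) :
    ∫ y in Ioc a b, y ^ α ∂ν ≤ b ^ α * (ν (Ioc a b)).toReal := by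
  have h1 : ∫ y in Ioc a b, y ^ α ∂ν ≤ ∫ y in Ioc a b, (b:ℝ) ^ α ∂ν := by
    apply setIntegral_mono_on
      ((auxIntegrableOn_rpow ν hα b).mono_set (Ioc_subset_Ioc_left ha.le))
      (integrableOn_const (measure_ne_top ν _)) measurableSet_Ioc
    exact fun y hy => Real.rpow_le_rpow (ha.trans hy.1).le hy.2 hα.le
  simpa [setIntegral_const, smul_eq_mul, mul_comm, measureReal_def] using h1

/-- If `H ∈ RV_θ` with `θ ∈ [0, α)`, then `x^α Ḡ(x)/H(x) → α/(α - θ)`,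
where `Ḡ(x) = 1 - G(x)` and `G(x) = F(x) - x^(-α) H(x)`. -/
theorem Gbar_ratio_limit_of_RV
    (α θ : ℝ) (hα : 0 < α) (hθ0 : 0 ≤ θ) (hθα : θ < α)
    (ν : Measure ℝ) [IsProbabilityMeasure ν] (hν : ν (Set.Iic 0) = 0)
    (F H G : ℝ → ℝ)
    (hF : ∀ t, F t = (ν (Set.Iic t)).toReal)
    (hH : ∀ t, H t = ∫ x in Set.Ioc 0 t, x ^ α ∂ν)
    (hG : ∀ t, G t = F t - t ^ (-α) * H t)
    (hRV : ∀ x : ℝ, 0 < x →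
      Tendsto (fun t => H (t * x) / H t) atTop (nhds (x ^ θ))) :
    Tendsto (fun x => x ^ α * (1 - G x) / H x) atTop (nhds (α / (α - θ))) := by
  -- the tail function
  set T : ℝ → ℝ := fun x => (ν (Ioi x)).toReal with hTdef
  have hTnn : ∀ x, 0 ≤ T x := fun x => ENNReal.toReal_nonneg
  have hTsub : ∀ a b : ℝ, a ≤ b → T a - T b = (ν (Ioc a b)).toReal := by
    intro a b hab
    have h1 : ν (Ioi a) = ν (Ioc a b) + ν (Ioi b) := by
      rw [← measure_union Ioc_disjoint_Ioi_same measurableSet_Ioi, Ioc_union_Ioi_eq_Ioi hab]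
    have h2 : T a = (ν (Ioc a b)).toReal + T b := by
      simp only [hTdef, h1, ENNReal.toReal_add (measure_ne_top ν _) (measure_ne_top ν _)]
    linarith
  have hHnn : ∀ t, 0 ≤ H t := by
    intro t; rw [hH]
    exact setIntegral_nonneg measurableSet_Ioc fun y hy => Real.rpow_nonneg hy.1.le _
  have hHd : ∀ a b : ℝ, 0 ≤ a → a ≤ b → H b - H a = ∫ y in Ioc a b, y ^ α ∂ν := by
    intro a b ha hab; rw [hH, hH]; exact auxHdiff ν hα ha hab
  have hHmono : ∀ a b : ℝ, 0 ≤ a → a ≤ b → H a ≤ H b := by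
    intro a b ha hab
    have h := hHd a b ha hab
    have h2 : 0 ≤ ∫ y in Ioc a b, y ^ α ∂ν :=
      setIntegral_nonneg measurableSet_Ioc fun y hy => Real.rpow_nonneg (ha.trans hy.1.le) _
    linarith
  have hstepU : ∀ a b : ℝ, 0 < a → a ≤ b → a ^ α * (T a - T b) ≤ H b - H a := by
    intro a b ha hab
    rw [hHd a b ha.le hab, hTsub a b hab]
    exact auxStepU ν hα ha hab
  have hstepL : ∀ a b : ℝ, 0 < a → a ≤ b → H b - H a ≤ b ^ α * (T a - T b) := by
    intro a b ha hab
    rw [hHd a b ha.le hab, hTsub a b hab]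
    exact auxStepL ν hα ha hab
  -- H is eventually positive
  have h2θ : Tendsto (fun t => H (t * 2) / H t) atTop (nhds ((2:ℝ) ^ θ)) := hRV 2 two_pos
  have hHpos : ∃ x₀ : ℝ, 1 ≤ x₀ ∧ ∀ t, x₀ ≤ t → 0 < H t := by
    by_contra hcon
    push_neg at hcon
    have hzero : ∀ s : ℝ, 0 ≤ s → H s = 0 := by
      intro s hs
      obtain ⟨t, ht, ht0⟩ := hcon (max s 1) (le_max_right _ _)
      have h1 : H s ≤ H t := hHmono s t hs ((le_max_left s 1).trans ht)
      have h2 := hHnn t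
      have h3 := hHnn s
      linarith
    have : Tendsto (fun t : ℝ => H (t * 2) / H t) atTop (nhds 0) := by
      apply tendsto_const_nhds.congr'
      filter_upwards [eventually_ge_atTop (0:ℝ)] with t ht
      rw [hzero t ht, div_zero]
    have h4 := tendsto_nhds_unique this h2θ
    have h5 : (0:ℝ) < 2 ^ θ := Real.rpow_pos_of_pos two_pos θ
    linarith
  obtain ⟨x₀, hx₀1, hx₀⟩ := hHpos
  -- tail tends to zero
  have hTtop : Tendsto T atTop (nhds 0) := by
    have h1 : Tendsto (fun x : ℝ => ν (Ioi x)) atTop (nhds (ν (⋂ x : ℝ, Ioi x))) :=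
      tendsto_measure_iInter_atTop (fun x => measurableSet_Ioi.nullMeasurableSet)
        (fun a b hab => Ioi_subset_Ioi hab) ⟨0, measure_ne_top ν _⟩
    have h2 : (⋂ x : ℝ, Ioi x) = (∅ : Set ℝ) := by
      apply eq_empty_iff_forall_notMem.2
      intro y hy
      exact lt_irrefl y (mem_iInter.1 hy y)
    rw [h2, measure_empty] at h1
    have h3 : Tendsto ENNReal.toReal (nhds 0) (nhds 0) := by
      simpa using ENNReal.tendsto_toReal (a := 0) (by simp)
    exact h3.comp h1
  -- constants for the crude bound
  set a2 : ℝ := (2:ℝ) ^ α with ha2def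
  set t2 : ℝ := (2:ℝ) ^ θ with ht2def
  have ht2a2 : t2 < a2 := Real.rpow_lt_rpow_of_exponent_lt one_lt_two hθα
  have ht2pos : 0 < t2 := Real.rpow_pos_of_pos two_pos θ
  have ha2pos : 0 < a2 := Real.rpow_pos_of_pos two_pos α
  set K : ℝ := t2 + (a2 - t2) / 2 with hKdef
  have hKpos : 0 < K := by simp only [hKdef]; linarith
  have hKt2 : t2 < K := by simp only [hKdef]; linarith
  set q : ℝ := K / a2 with hqdef
  have hq0 : 0 < q := div_pos hKpos ha2pos
  have hq1 : q < 1 := by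
    rw [hqdef, div_lt_one ha2pos, hKdef]; linarith
  have ha2q : a2 * q = K := by
    rw [hqdef]; field_simp
  -- eventual one-step doubling bound
  have hev : ∀ᶠ t in atTop, H (t * 2) ≤ K * H t := by
    filter_upwards [h2θ.eventually_lt_const hKt2, eventually_ge_atTop x₀] with t h1 h2
    have hHt : 0 < H t := hx₀ t h2
    rw [div_lt_iff₀ hHt] at h1
    exact h1.le
  obtain ⟨X, hX⟩ := (hev.and (eventually_ge_atTop (max x₀ 1))).exists_forall_of_atTop
  have hX' : ∀ t : ℝ, X ≤ t → H (t * 2) ≤ K * H t ∧ 0 < H t ∧ 1 ≤ t := by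
    intro t ht
    obtain ⟨h1, h2⟩ := hX t ht
    exact ⟨h1, hx₀ t ((le_max_left _ _).trans h2), (le_max_right x₀ 1).trans h2⟩
  -- geometric growth of H along powers of two
  have hpowpos : ∀ n : ℕ, (0:ℝ) < 2 ^ n := fun n => pow_pos two_pos n
  have hgeomH : ∀ x : ℝ, X ≤ x → ∀ n : ℕ, H ((2:ℝ) ^ n * x) ≤ K ^ n * H x := by
    intro x hx n
    induction n with
    | zero => simp
    | succ n ih =>
      have hx1 : (1:ℝ) ≤ x := (hX' x hx).2.2
      have hxn : X ≤ (2:ℝ) ^ n * x := le_trans hx (le_mul_of_one_le_left (by linarith) (one_le_pow₀ one_le_two))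
      have h1 := (hX' _ hxn).1
      have h2 : (2:ℝ) ^ (n+1) * x = ((2:ℝ) ^ n * x) * 2 := by ring
      rw [h2]
      calc H (((2:ℝ) ^ n * x) * 2) ≤ K * H ((2:ℝ) ^ n * x) := h1
        _ ≤ K * (K ^ n * H x) := by
            exact mul_le_mul_of_nonneg_left ih hKpos.le
        _ = K ^ (n+1) * H x := by ring
  -- rpow of powers of two
  have hrpow2 : ∀ n : ℕ, ((2:ℝ) ^ n) ^ α = a2 ^ n := by
    intro n
    rw [← Real.rpow_natCast 2 n, ← Real.rpow_mul (by norm_num), mul_comm,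
      Real.rpow_mul (by norm_num), Real.rpow_natCast]
  -- telescoping induction
  have hkey : ∀ x : ℝ, X ≤ x → ∀ N : ℕ,
      x ^ α * (T x - T ((2:ℝ) ^ N * x)) ≤ (K * ∑ n ∈ Finset.range N, q ^ n) * H x := by
    intro x hx N
    have hx1 : (1:ℝ) ≤ x := (hX' x hx).2.2
    have hx0 : (0:ℝ) < x := by linarith
    induction N with
    | zero =>
      simp
    | succ N ih =>
      set y : ℝ := (2:ℝ) ^ N * x with hydef
      have hy0 : 0 < y := mul_pos (hpowpos N) hx0
      have hxy : x ≤ y := le_mul_of_one_le_left hx0.le (one_le_pow₀ one_le_two)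
      have hyX : X ≤ y := hx.trans hxy
      have h2y : (2:ℝ) ^ (N+1) * x = y * 2 := by rw [hydef]; ring
      have hstep := hstepU y (y * 2) hy0 (by linarith)
      have hH2y : H (y * 2) ≤ K ^ (N+1) * H x := by
        have := hgeomH x hx (N+1)
        rw [show (2:ℝ) ^ (N+1) * x = y * 2 from h2y] at this
        exact this
      have hyα : y ^ α = a2 ^ N * x ^ α := by
        rw [hydef, Real.mul_rpow (by positivity) hx0.le, hrpow2]
      -- bound the increment term
      have hincr : x ^ α * (T y - T (y * 2)) ≤ K * q ^ N * H x := by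
        have hpos : (0:ℝ) < a2 ^ N := pow_pos ha2pos N
        rw [← mul_le_mul_iff_right₀ hpos]
        calc a2 ^ N * (x ^ α * (T y - T (y * 2))) = y ^ α * (T y - T (y * 2)) := by
              rw [hyα]; ring
          _ ≤ H (y * 2) - H y := hstep
          _ ≤ H (y * 2) := by linarith [hHnn y]
          _ ≤ K ^ (N+1) * H x := hH2y
          _ = a2 ^ N * (K * q ^ N * H x) := by
              rw [← ha2q, mul_pow]; ring
      have hsplit : x ^ α * (T x - T ((2:ℝ) ^ (N+1) * x)) =
          x ^ α * (T x - T y) + x ^ α * (T y - T (y * 2)) := by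
        rw [h2y]; ring
      rw [hsplit, Finset.sum_range_succ]
      calc x ^ α * (T x - T y) + x ^ α * (T y - T (y * 2))
          ≤ (K * ∑ n ∈ Finset.range N, q ^ n) * H x + K * q ^ N * H x := add_le_add ih hincr
        _ = (K * (∑ n ∈ Finset.range N, q ^ n + q ^ N)) * H x := by ring
  -- geometric sum bound
  set C : ℝ := K / (1 - q) with hCdef
  have hC0 : 0 < C := div_pos hKpos (by linarith)
  have hsumle : ∀ N : ℕ, K * ∑ n ∈ Finset.range N, q ^ n ≤ C := by
    intro N
    have hg := geom_sum_mul q N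
    have hqN : 0 ≤ q ^ N := pow_nonneg hq0.le N
    rw [hCdef, le_div_iff₀ (by linarith)]
    nlinarith
  -- crude bound : x^α T x ≤ C H x for x ≥ X
  have hcrude : ∀ x : ℝ, X ≤ x → x ^ α * T x ≤ C * H x := by
    intro x hx
    have hx1 : (1:ℝ) ≤ x := (hX' x hx).2.2
    have hx0 : (0:ℝ) < x := by linarith
    have hlim : Tendsto (fun N : ℕ => x ^ α * T ((2:ℝ) ^ N * x)) atTop (nhds 0) := by
      have h1 : Tendsto (fun N : ℕ => (2:ℝ) ^ N * x) atTop atTop :=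
        Tendsto.atTop_mul_const hx0 (tendsto_pow_atTop_atTop_of_one_lt one_lt_two)
      have h2 := hTtop.comp h1
      simpa using (h2.const_mul (x ^ α))
    have hev2 : ∀ N : ℕ, x ^ α * T x - C * H x ≤ x ^ α * T ((2:ℝ) ^ N * x) := by
      intro N
      have h1 := hkey x hx N
      have h2 := hsumle N
      have h3 := hHnn x
      nlinarith [mul_le_mul_of_nonneg_right h2 h3]
    have := ge_of_tendsto hlim (Eventually.of_forall hev2)
    linarith
  -- the normalized ratio
  set r : ℝ → ℝ := fun x => x ^ α * T x / H x with hrdef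
  have hrup : ∀ᶠ x in atTop, r x ≤ C := by
    filter_upwards [eventually_ge_atTop X] with x hx
    have h1 := hcrude x hx
    have h2 := (hX' x hx).2.1
    rw [hrdef]
    rw [div_le_iff₀ h2]
    nlinarith
  have hrlo : ∀ᶠ x in atTop, 0 ≤ r x := by
    filter_upwards [eventually_ge_atTop X] with x hx
    have hx1 : (1:ℝ) ≤ x := (hX' x hx).2.2
    exact div_nonneg (mul_nonneg (Real.rpow_nonneg (by linarith) α) (hTnn x)) (hHnn x)
  have hbddU : IsBoundedUnder (· ≤ ·) atTop r := ⟨C, hrup⟩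
  have hbddL : IsBoundedUnder (· ≥ ·) atTop r := ⟨0, hrlo⟩
  set u : ℝ := limsup r atTop with hudef
  set v : ℝ := liminf r atTop with hvdef
  have hvu : v ≤ u := liminf_le_limsup hbddU hbddL
  have hv0 : 0 ≤ v := le_liminf_of_le hbddU.isCoboundedUnder_ge hrlo
  have huC : u ≤ C := limsup_le_of_le hbddL.isCoboundedUnder_le hrup
  -- one-step inequalities for arbitrary l > 1 and small ε
  have honestep : ∀ l : ℝ, 1 < l → ∀ ε : ℝ, 0 < ε → ε < 1 →
      u ≤ l ^ (-α) * ((l ^ θ + ε) * (u + ε)) + (l ^ θ + ε - 1) ∧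
      l ^ (-α) * ((l ^ θ - ε) * (v - ε)) + l ^ (-α) * (l ^ θ - ε - 1) ≤ v := by
    intro l hl ε hε hε1
    have hl0 : (0:ℝ) < l := by linarith
    have hlθ : Tendsto (fun t => H (t * l) / H t) atTop (nhds (l ^ θ)) := hRV l hl0
    have hlθ1 : (1:ℝ) ≤ l ^ θ := Real.one_le_rpow hl.le hθ0
    have hlnegα : (0:ℝ) < l ^ (-α) := Real.rpow_pos_of_pos hl0 _
    have hmul : Tendsto (fun x : ℝ => x * l) atTop atTop :=
      Tendsto.atTop_mul_const hl0 tendsto_id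
    have e1 : ∀ᶠ x in atTop, r (x * l) ≤ u + ε := by
      have h0 : ∀ᶠ y in atTop, r y < u + ε :=
        eventually_lt_of_limsup_lt (by rw [← hudef]; linarith) hbddU
      exact (hmul.eventually h0).mono fun x hx => hx.le
    have e2 : ∀ᶠ x in atTop, v - ε ≤ r (x * l) := by
      have h0 : ∀ᶠ y in atTop, v - ε < r y :=
        eventually_lt_of_lt_liminf (by rw [← hvdef]; linarith) hbddL
      exact (hmul.eventually h0).mono fun x hx => hx.le
    have e3 : ∀ᶠ x in atTop, H (x * l) / H x < l ^ θ + ε :=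
      hlθ.eventually_lt_const (by linarith)
    have e4 : ∀ᶠ x in atTop, l ^ θ - ε < H (x * l) / H x :=
      hlθ.eventually_const_lt (by linarith)
    have e5 : ∀ᶠ x in atTop, 0 ≤ r (x * l) := hmul.eventually hrlo
    -- the main pointwise identity facts
    have hmain : ∀ x : ℝ, X ≤ x →
        (r x ≤ l ^ (-α) * ((H (x*l)/H x) * r (x * l)) + (H (x*l)/H x - 1) ∧
         l ^ (-α) * ((H (x*l)/H x) * r (x * l)) + l ^ (-α) * (H (x*l)/H x - 1) ≤ r x) := by
      intro x hx
      have hx1 : (1:ℝ) ≤ x := (hX' x hx).2.2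
      have hx0 : (0:ℝ) < x := by linarith
      have hHx : 0 < H x := (hX' x hx).2.1
      have hxxl : x ≤ x * l := le_mul_of_one_le_right hx0.le hl.le
      have hxlX : X ≤ x * l := hx.trans hxxl
      have hHxl : 0 < H (x * l) := (hX' _ hxlX).2.1
      set c : ℝ := H (x * l) / H x with hcdef
      have hcH : c * H x = H (x * l) := by rw [hcdef, div_mul_cancel₀ _ hHx.ne']
      have hxlα : (x * l) ^ α = x ^ α * l ^ α := Real.mul_rpow hx0.le hl0.le
      have hll : l ^ (-α) * l ^ α = 1 := by
        rw [← Real.rpow_add hl0]; simp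
      have hTxl : x ^ α * T (x * l) = l ^ (-α) * ((x * l) ^ α * T (x * l)) := by
        calc x ^ α * T (x * l) = (l ^ (-α) * l ^ α) * (x ^ α * T (x * l)) := by
              rw [hll]; ring
          _ = l ^ (-α) * ((x * l) ^ α * T (x * l)) := by rw [hxlα]; ring
      have hrr : (x * l) ^ α * T (x * l) = r (x * l) * H (x * l) := by
        rw [hrdef]; field_simp
      have hsU := hstepU x (x * l) hx0 hxxl
      have hsL := hstepL x (x * l) hx0 hxxl
      constructor
      · rw [hrdef, div_le_iff₀ hHx]
        calc x ^ α * T x ≤ x ^ α * T (x * l) + (H (x * l) - H x) := by linarith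
          _ = l ^ (-α) * (r (x * l) * H (x * l)) + (H (x * l) - H x) := by rw [hTxl, hrr]
          _ = (l ^ (-α) * (c * r (x * l)) + (c - 1)) * H x := by rw [← hcH]; ring
      · rw [hrdef, le_div_iff₀ hHx]
        have hkey2 : x ^ α * (T x - T (x * l)) = l ^ (-α) * ((x * l) ^ α * (T x - T (x * l))) := by
          calc x ^ α * (T x - T (x * l))
              = (l ^ (-α) * l ^ α) * (x ^ α * (T x - T (x * l))) := by rw [hll]; ring
            _ = l ^ (-α) * ((x * l) ^ α * (T x - T (x * l))) := by rw [hxlα]; ring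
        have h1 : l ^ (-α) * (H (x * l) - H x) ≤ x ^ α * (T x - T (x * l)) := by
          rw [hkey2]
          exact mul_le_mul_of_nonneg_left hsL hlnegα.le
        calc (l ^ (-α) * (c * r (x * l)) + l ^ (-α) * (c - 1)) * H x
            = l ^ (-α) * (r (x * l) * H (x * l)) + l ^ (-α) * (H (x * l) - H x) := by
              rw [← hcH]; ring
          _ = x ^ α * T (x * l) + l ^ (-α) * (H (x * l) - H x) := by rw [hTxl, hrr]
          _ ≤ x ^ α * T (x * l) + x ^ α * (T x - T (x * l)) := by linarith
          _ = x ^ α * T x := by ring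
    constructor
    · rw [hudef]
      apply limsup_le_of_le hbddL.isCoboundedUnder_le
      filter_upwards [e1, e3, eventually_ge_atTop X] with x h1 h3 hx
      have hm := (hmain x hx).1
      have hx1 : (1:ℝ) ≤ x := (hX' x hx).2.2
      have hHx : 0 < H x := (hX' x hx).2.1
      have hxlX : X ≤ x * l := hx.trans (le_mul_of_one_le_right (by linarith) hl.le)
      have hc0 : 0 ≤ H (x * l) / H x := div_nonneg (hHnn _) (hHnn _)
      have huε : 0 ≤ u + ε := by linarith [hvu, hv0]
      have hb1 : H (x * l) / H x * r (x * l) ≤ (l ^ θ + ε) * (u + ε) :=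
        (mul_le_mul_of_nonneg_left h1 hc0).trans
          (mul_le_mul_of_nonneg_right h3.le huε)
      have hb2 : l ^ (-α) * (H (x * l) / H x * r (x * l)) ≤ l ^ (-α) * ((l ^ θ + ε) * (u + ε)) :=
        mul_le_mul_of_nonneg_left hb1 hlnegα.le
      have hb3 : H (x * l) / H x - 1 ≤ l ^ θ + ε - 1 := by linarith
      linarith
    · rw [hvdef]
      apply le_liminf_of_le hbddU.isCoboundedUnder_ge
      filter_upwards [e2, e4, e5, eventually_ge_atTop X] with x h2 h4 h5 hx
      have hm := (hmain x hx).2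
      have hc0 : 0 ≤ H (x * l) / H x := div_nonneg (hHnn _) (hHnn _)
      have hb1 : (l ^ θ - ε) * (v - ε) ≤ H (x * l) / H x * r (x * l) := by
        rcases le_or_gt (v - ε) 0 with hv | hv
        · have : (l ^ θ - ε) * (v - ε) ≤ 0 := mul_nonpos_of_nonneg_of_nonpos (by linarith) hv
          exact this.trans (mul_nonneg hc0 h5)
        · exact mul_le_mul h4.le h2 hv.le hc0
      have hb2 : l ^ (-α) * ((l ^ θ - ε) * (v - ε)) ≤ l ^ (-α) * (H (x * l) / H x * r (x * l)) :=
        mul_le_mul_of_nonneg_left hb1 hlnegα.le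
      have hb3 : l ^ (-α) * (l ^ θ - ε - 1) ≤ l ^ (-α) * (H (x * l) / H x - 1) :=
        mul_le_mul_of_nonneg_left (by linarith) hlnegα.le
      linarith
  -- let ε → 0
  set κ : ℝ := θ / (α - θ) with hκdef
  have hfix : ∀ l : ℝ, 1 < l →
      u ≤ l ^ (-α) * (l ^ θ * u) + (l ^ θ - 1) ∧
      l ^ (-α) * (l ^ θ * v) + l ^ (-α) * (l ^ θ - 1) ≤ v := by
    intro l hl
    have hcont1 : Continuous fun ε : ℝ =>
        l ^ (-α) * ((l ^ θ + ε) * (u + ε)) + (l ^ θ + ε - 1) :=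
      (continuous_const.mul ((continuous_const.add continuous_id).mul
        (continuous_const.add continuous_id))).add
        ((continuous_const.add continuous_id).sub continuous_const)
    have hcont2 : Continuous fun ε : ℝ =>
        l ^ (-α) * ((l ^ θ - ε) * (v - ε)) + l ^ (-α) * (l ^ θ - ε - 1) :=
      (continuous_const.mul ((continuous_const.sub continuous_id).mul
        (continuous_const.sub continuous_id))).add
        (continuous_const.mul ((continuous_const.sub continuous_id).sub continuous_const))
    have hεmem : Ioo (0:ℝ) 1 ∈ nhdsWithin (0:ℝ) (Ioi 0) :=
      Ioo_mem_nhdsGT_of_mem (by constructor <;> norm_num)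
    constructor
    · have h1 : Tendsto (fun ε : ℝ => l ^ (-α) * ((l ^ θ + ε) * (u + ε)) + (l ^ θ + ε - 1))
          (nhdsWithin 0 (Ioi 0)) (nhds (l ^ (-α) * ((l ^ θ + 0) * (u + 0)) + (l ^ θ + 0 - 1))) :=
        (hcont1.tendsto 0).mono_left nhdsWithin_le_nhds
      have h2 := ge_of_tendsto h1 (by
        filter_upwards [hεmem] with ε hε
        exact (honestep l hl ε hε.1 hε.2).1)
      simpa using h2
    · have h1 : Tendsto (fun ε : ℝ => l ^ (-α) * ((l ^ θ - ε) * (v - ε)) + l ^ (-α) * (l ^ θ - ε - 1))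
          (nhdsWithin 0 (Ioi 0)) (nhds (l ^ (-α) * ((l ^ θ - 0) * (v - 0)) + l ^ (-α) * (l ^ θ - 0 - 1))) :=
        (hcont2.tendsto 0).mono_left nhdsWithin_le_nhds
      have h2 := le_of_tendsto h1 (by
        filter_upwards [hεmem] with ε hε
        exact (honestep l hl ε hε.1 hε.2).2)
      simpa using h2
  -- solve the fixed-point inequalities
  have hgbound : ∀ l : ℝ, 1 < l →
      u ≤ (l ^ θ - 1) / (1 - l ^ (θ - α)) ∧
      l ^ (-α) * ((l ^ θ - 1) / (1 - l ^ (θ - α))) ≤ v := by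
    intro l hl
    obtain ⟨h1, h2⟩ := hfix l hl
    have hl0 : (0:ℝ) < l := by linarith
    have hsplit : l ^ (θ - α) = l ^ (-α) * l ^ θ := by
      rw [← Real.rpow_add hl0]; ring_nf
    have hlt1 : l ^ (θ - α) < 1 := Real.rpow_lt_one_of_one_lt_of_neg hl (by linarith)
    have hpos : (0:ℝ) < 1 - l ^ (θ - α) := by linarith
    rw [hsplit] at hlt1 hpos
    constructor
    · rw [hsplit, le_div_iff₀ hpos]
      linarith [h1]
    · rw [hsplit, mul_div_assoc', div_le_iff₀ hpos]
      linarith [h2]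
  -- the l → 1 limits
  have hslope : ∀ p : ℝ, Tendsto (fun l : ℝ => (l ^ p - 1) / (l - 1))
      (nhdsWithin 1 (Ioi 1)) (nhds p) := by
    intro p
    have hd : HasDerivAt (fun y : ℝ => y ^ p) (p * (1:ℝ) ^ (p - 1)) 1 :=
      Real.hasDerivAt_rpow_const (Or.inl one_ne_zero)
    rw [Real.one_rpow, mul_one] at hd
    have h1 := hasDerivAt_iff_tendsto_slope.1 hd
    have h2 := h1.mono_left (nhdsWithin_mono 1 (fun y (hy : y ∈ Ioi 1) => ne_of_gt hy))
    apply h2.congr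
    intro l
    rw [slope_def_field, Real.one_rpow]
  have hgl : Tendsto (fun l : ℝ => (l ^ θ - 1) / (1 - l ^ (θ - α)))
      (nhdsWithin 1 (Ioi 1)) (nhds κ) := by
    have h1 := hslope θ
    have h2 := (hslope (θ - α)).neg
    have h3 : Tendsto (fun l : ℝ => ((l ^ θ - 1) / (l - 1)) / (-((l ^ (θ - α) - 1) / (l - 1))))
        (nhdsWithin 1 (Ioi 1)) (nhds (θ / (α - θ))) := by
      have h4 := h1.div h2 (show -(θ - α) ≠ 0 by intro h; apply absurd h; intro h'; linarith)
      have h5 : θ / -(θ - α) = θ / (α - θ) := by ring_nf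
      rwa [h5] at h4
    rw [hκdef]
    apply h3.congr'
    filter_upwards [self_mem_nhdsWithin] with l (hl : l ∈ Ioi 1)
    have hl1 : l - 1 ≠ 0 := ne_of_gt (sub_pos.2 hl)
    have hlt1 : l ^ (θ - α) < 1 := Real.rpow_lt_one_of_one_lt_of_neg hl (by linarith)
    have hne : 1 - l ^ (θ - α) ≠ 0 := by intro h; rw [sub_eq_zero] at h; rw [← h] at hlt1; exact lt_irrefl _ hlt1
    field_simp
    have hne2 : l ^ (θ - α) - 1 ≠ 0 := sub_ne_zero.2 hlt1.ne
    rw [neg_div', div_eq_iff hne2]; ring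
  have hvg : Tendsto (fun l : ℝ => l ^ (-α) * ((l ^ θ - 1) / (1 - l ^ (θ - α))))
      (nhdsWithin 1 (Ioi 1)) (nhds κ) := by
    have h0 : Tendsto (fun l : ℝ => l ^ (-α)) (nhdsWithin 1 (Ioi 1)) (nhds 1) := by
      have h1 := (Real.continuousAt_rpow_const 1 (-α) (Or.inl one_ne_zero)).tendsto
      rw [Real.one_rpow] at h1
      exact h1.mono_left nhdsWithin_le_nhds
    simpa using h0.mul hgl
  have huκ : u ≤ κ := ge_of_tendsto hgl (by
    filter_upwards [self_mem_nhdsWithin] with l (hl : l ∈ Ioi 1)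
    exact (hgbound l hl).1)
  have hvκ : κ ≤ v := le_of_tendsto hvg (by
    filter_upwards [self_mem_nhdsWithin] with l (hl : l ∈ Ioi 1)
    exact (hgbound l hl).2)
  have hru : Tendsto r atTop (nhds κ) :=
    tendsto_of_le_liminf_of_limsup_le (by rw [← hvdef]; exact hvκ)
      (by rw [← hudef]; exact huκ) hbddU hbddL
  -- final assembly
  have hfinal : ∀ᶠ x in atTop, x ^ α * (1 - G x) / H x = r x + 1 := by
    filter_upwards [eventually_ge_atTop X] with x hx
    have hx1 : (1:ℝ) ≤ x := (hX' x hx).2.2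
    have hx0 : (0:ℝ) < x := by linarith
    have hHx : 0 < H x := (hX' x hx).2.1
    have hFT : F x + T x = 1 := by
      have h1 : ν (Iic x) + ν (Ioi x) = 1 := by
        rw [← measure_union (Iic_disjoint_Ioi le_rfl) measurableSet_Ioi, Iic_union_Ioi,
          measure_univ]
      have h2 := congrArg ENNReal.toReal h1
      rw [ENNReal.toReal_add (measure_ne_top ν _) (measure_ne_top ν _)] at h2
      simpa [hF] using h2
    have h1G : 1 - G x = T x + x ^ (-α) * H x := by
      rw [hG]; linarith
    rw [h1G, hrdef, Real.rpow_neg hx0.le]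
    have hxα : x ^ α ≠ 0 := (Real.rpow_pos_of_pos hx0 α).ne'
    field_simp
  have hκ1 : α / (α - θ) = κ + 1 := by
    rw [hκdef]
    have : α - θ ≠ 0 := by intro h; linarith
    field_simp
    ring
  rw [hκ1]
  exact Tendsto.congr' (hfinal.mono fun x hx => hx.symm) (hru.add tendsto_const_nhds)
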